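/- Let n be a nonzero integer and let ν ∈ ℂ satisfy P_n(ν) = 0. Then: (a) the vector α := (Rρ̄, −R(ū−ν), (λ₀in+ū−ν)(ū−ν) − Rθ̄) satisfies R_n·α = ν·α; (b) since ν ≠ ū, the vector β := (−Rρ̄/(ū−ν), R, (Rθ̄ − (λ₀in+ū−ν)(ū−ν))/(ū−ν)) is well defined and satisfies R_n·β = ν·β; (c) the vector γ := ((λ₀in+ū−ν)(κ₀in+ū−ν) − R²θ̄/c₀, −(Rθ̄/ρ̄)(κ₀in+ū−ν), R²θ̄²/(ρ̄c₀)) satisfies R_n·γ = ν·γ. In particular every root ν of P_n is an eigenvalue of R_n with the displayed eigenvectors. -/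

import Mathlib

open Complex

/-- The characteristic cubic `P_n` of the matrix `R_n` arising from the non-barotropic
linearized compressible Navier–Stokes system. -/
noncomputable def Pcubic (lam kap u ρ θ R c : ℝ) (n : ℤ) (ν : ℂ) : ℂ :=
  ν ^ 3 - (((lam : ℂ) + (kap : ℂ)) * Complex.I * (n : ℂ) + 3 * (u : ℂ)) * ν ^ 2
    - ((lam : ℂ) * (kap : ℂ) * (n : ℂ) ^ 2
        - 2 * ((lam : ℂ) + (kap : ℂ)) * (u : ℂ) * Complex.I * (n : ℂ)
        - 3 * (u : ℂ) ^ 2 + (R : ℂ) ^ 2 * (θ : ℂ) / (c : ℂ) + (R : ℂ) * (θ : ℂ)) * ν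
    + (lam : ℂ) * (kap : ℂ) * (u : ℂ) * (n : ℂ) ^ 2
    - ((lam : ℂ) + (kap : ℂ)) * (u : ℂ) ^ 2 * Complex.I * (n : ℂ)
    - (u : ℂ) ^ 3 + (R : ℂ) ^ 2 * (θ : ℂ) / (c : ℂ) * (u : ℂ)
    + (R : ℂ) * (θ : ℂ) * (kap : ℂ) * Complex.I * (n : ℂ) + (R : ℂ) * (θ : ℂ) * (u : ℂ)

/-- The matrix `R_n` of the non-barotropic linearized system, with rows
`(ū, ρ̄, 0)`, `(Rθ̄/ρ̄, λ₀in + ū, R)`, `(0, Rθ̄/c₀, κ₀in + ū)`. -/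
noncomputable def Rmat3 (lam kap u ρ θ R c : ℝ) (n : ℤ) : Matrix (Fin 3) (Fin 3) ℂ :=
  !![(u : ℂ), (ρ : ℂ), 0;
     ((R * θ / ρ : ℝ) : ℂ), (lam : ℂ) * Complex.I * (n : ℂ) + (u : ℂ), (R : ℂ);
     0, ((R * θ / c : ℝ) : ℂ), (kap : ℂ) * Complex.I * (n : ℂ) + (u : ℂ)]

/-- Every root `ν` of `P_n` (for `n ≠ 0`) is an eigenvalue of `R_n`, with the three
displayed eigenvectors `α`, `β`, `γ`; moreover `ν ≠ ū` so `β` is well defined. -/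
theorem eigenvectors_of_Rmat3 (lam kap u ρ θ R c : ℝ) (hlam : 0 < lam) (hkap : 0 < kap)
    (hu : 0 < u) (hρ : 0 < ρ) (hθ : 0 < θ) (hR : 0 < R) (hc : 0 < c)
    (n : ℤ) (hn : n ≠ 0) (ν : ℂ) (hν : Pcubic lam kap u ρ θ R c n ν = 0) :
    ν ≠ (u : ℂ) ∧
    (Rmat3 lam kap u ρ θ R c n).mulVec
        ![(R : ℂ) * (ρ : ℂ), -(R : ℂ) * ((u : ℂ) - ν),
          ((lam : ℂ) * Complex.I * (n : ℂ) + (u : ℂ) - ν) * ((u : ℂ) - ν)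
            - (R : ℂ) * (θ : ℂ)]
      = ν • ![(R : ℂ) * (ρ : ℂ), -(R : ℂ) * ((u : ℂ) - ν),
          ((lam : ℂ) * Complex.I * (n : ℂ) + (u : ℂ) - ν) * ((u : ℂ) - ν)
            - (R : ℂ) * (θ : ℂ)] ∧
    (Rmat3 lam kap u ρ θ R c n).mulVec
        ![-(R : ℂ) * (ρ : ℂ) / ((u : ℂ) - ν), (R : ℂ),
          ((R : ℂ) * (θ : ℂ)
            - ((lam : ℂ) * Complex.I * (n : ℂ) + (u : ℂ) - ν) * ((u : ℂ) - ν))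
            / ((u : ℂ) - ν)]
      = ν • ![-(R : ℂ) * (ρ : ℂ) / ((u : ℂ) - ν), (R : ℂ),
          ((R : ℂ) * (θ : ℂ)
            - ((lam : ℂ) * Complex.I * (n : ℂ) + (u : ℂ) - ν) * ((u : ℂ) - ν))
            / ((u : ℂ) - ν)] ∧
    (Rmat3 lam kap u ρ θ R c n).mulVec
        ![((lam : ℂ) * Complex.I * (n : ℂ) + (u : ℂ) - ν)
            * ((kap : ℂ) * Complex.I * (n : ℂ) + (u : ℂ) - ν)
            - (R : ℂ) ^ 2 * (θ : ℂ) / (c : ℂ),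
          -((R : ℂ) * (θ : ℂ) / (ρ : ℂ)) * ((kap : ℂ) * Complex.I * (n : ℂ) + (u : ℂ) - ν),
          (R : ℂ) ^ 2 * (θ : ℂ) ^ 2 / ((ρ : ℂ) * (c : ℂ))]
      = ν • ![((lam : ℂ) * Complex.I * (n : ℂ) + (u : ℂ) - ν)
            * ((kap : ℂ) * Complex.I * (n : ℂ) + (u : ℂ) - ν)
            - (R : ℂ) ^ 2 * (θ : ℂ) / (c : ℂ),
          -((R : ℂ) * (θ : ℂ) / (ρ : ℂ)) * ((kap : ℂ) * Complex.I * (n : ℂ) + (u : ℂ) - ν),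
          (R : ℂ) ^ 2 * (θ : ℂ) ^ 2 / ((ρ : ℂ) * (c : ℂ))] := by
  have hcne : (c : ℂ) ≠ 0 := Complex.ofReal_ne_zero.mpr hc.ne'
  have hρne : (ρ : ℂ) ≠ 0 := Complex.ofReal_ne_zero.mpr hρ.ne'
  have hRne : (R : ℂ) ≠ 0 := Complex.ofReal_ne_zero.mpr hR.ne'
  have hθne : (θ : ℂ) ≠ 0 := Complex.ofReal_ne_zero.mpr hθ.ne'
  have hkne : (kap : ℂ) ≠ 0 := Complex.ofReal_ne_zero.mpr hkap.ne'
  have hnne : (n : ℂ) ≠ 0 := by exact_mod_cast Int.cast_ne_zero.mpr hn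
  unfold Pcubic at hν
  have hnu : ν ≠ (u : ℂ) := by
    intro h
    rw [h] at hν
    have h0 : (R : ℂ) * (θ : ℂ) * (kap : ℂ) * Complex.I * (n : ℂ) = 0 := by
      linear_combination hν
    exact (mul_ne_zero (mul_ne_zero (mul_ne_zero (mul_ne_zero hRne hθne) hkne)
      Complex.I_ne_zero) hnne) h0
  have hsub : (u : ℂ) - ν ≠ 0 := sub_ne_zero.mpr (Ne.symm hnu)
  have hα : (Rmat3 lam kap u ρ θ R c n).mulVec
        ![(R : ℂ) * (ρ : ℂ), -(R : ℂ) * ((u : ℂ) - ν),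
          ((lam : ℂ) * Complex.I * (n : ℂ) + (u : ℂ) - ν) * ((u : ℂ) - ν)
            - (R : ℂ) * (θ : ℂ)]
      = ν • ![(R : ℂ) * (ρ : ℂ), -(R : ℂ) * ((u : ℂ) - ν),
          ((lam : ℂ) * Complex.I * (n : ℂ) + (u : ℂ) - ν) * ((u : ℂ) - ν)
            - (R : ℂ) * (θ : ℂ)] := by
    funext i
    fin_cases i <;>
      simp [Rmat3, Matrix.mulVec, dotProduct, Fin.sum_univ_three,
        Complex.ofReal_div, Complex.ofReal_mul, Matrix.smul_cons, smul_eq_mul]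
    · ring
    · field_simp
      ring
    · linear_combination -hν + ((u : ℂ) - ν) * (lam : ℂ) * (kap : ℂ) * (n : ℂ) ^ 2
        * Complex.I_sq
  refine ⟨hnu, hα, ?_, ?_⟩
  · have hβ : ![-(R : ℂ) * (ρ : ℂ) / ((u : ℂ) - ν), (R : ℂ),
          ((R : ℂ) * (θ : ℂ)
            - ((lam : ℂ) * Complex.I * (n : ℂ) + (u : ℂ) - ν) * ((u : ℂ) - ν))
            / ((u : ℂ) - ν)]
        = (-((u : ℂ) - ν)⁻¹) • ![(R : ℂ) * (ρ : ℂ), -(R : ℂ) * ((u : ℂ) - ν),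
          ((lam : ℂ) * Complex.I * (n : ℂ) + (u : ℂ) - ν) * ((u : ℂ) - ν)
            - (R : ℂ) * (θ : ℂ)] := by
      funext i
      fin_cases i <;>
        simp only [Matrix.cons_val', Matrix.cons_val_zero, Matrix.cons_val_one,
          Matrix.head_cons, Matrix.empty_val', Matrix.cons_val_fin_one,
          Matrix.head_fin_const, Matrix.cons_val_two, Matrix.tail_cons,
          Pi.smul_apply, smul_eq_mul, Fin.zero_eta, Fin.mk_one, Fin.reduceFinMk, Fin.isValue, Matrix.cons_val] <;>
        field_simp <;> ring
    rw [hβ, Matrix.mulVec_smul, hα, smul_comm]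
  · funext i
    fin_cases i <;>
      simp [Rmat3, Matrix.mulVec, dotProduct, Fin.sum_univ_three,
        Complex.ofReal_div, Complex.ofReal_mul, Matrix.smul_cons, smul_eq_mul]
    · linear_combination -hν + ((u : ℂ) - ν) * (lam : ℂ) * (kap : ℂ) * (n : ℂ) ^ 2
        * Complex.I_sq
        - ((u : ℂ) * R * θ + Complex.I * n * kap * R * θ - ν * R * θ)
          * mul_inv_cancel₀ hρne
    · field_simp
      ring
    · field_simp
      ring
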